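/- In the vertex potential process (Paz–Schwartzman update rule with parameter ε ≥ 0), after processing the entire stream S, every edge e = {u,v} in S satisfies w(e) ≤ (1+ε)·(φ_S(u) + φ_S(v)), where φ_S denotes the final potentials. -/

import Mathlib

open scoped Classical

/-- One step of the Paz–Schwartzman vertex potential process. -/
noncomputable def psStep {V : Type*} [DecidableEq V] (ε : ℝ) (φ : V → ℝ)
    (e : (V × V) × ℝ) : V → ℝ :=
  if (1 + ε) * (φ e.1.1 + φ e.1.2) ≤ e.2 then
    fun v => if v = e.1.1 ∨ v = e.1.2 then φ v + (e.2 - φ e.1.1 - φ e.1.2) else φ v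
  else φ

/-- Potentials after processing a stream of weighted edges. -/
noncomputable def psPot {V : Type*} [DecidableEq V] (ε : ℝ)
    (l : List ((V × V) × ℝ)) : V → ℝ :=
  l.foldl (psStep ε) (fun _ => 0)

/-- Reduced weight assigned to an edge arriving when the potentials are `φ`. -/
noncomputable def psRed {V : Type*} [DecidableEq V] (ε : ℝ) (φ : V → ℝ)
    (e : (V × V) × ℝ) : ℝ :=
  if (1 + ε) * (φ e.1.1 + φ e.1.2) ≤ e.2 then e.2 - φ e.1.1 - φ e.1.2 else 0

lemma psStep_mono {V : Type*} [DecidableEq V] (ε : ℝ) (hε : 0 ≤ ε) (φ : V → ℝ)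
    (hφ : ∀ v, 0 ≤ φ v) (e : (V × V) × ℝ) (v : V) :
    φ v ≤ psStep ε φ e v := by
  unfold psStep
  split_ifs with h
  · simp only
    split_ifs with h2
    · nlinarith [hφ e.1.1, hφ e.1.2]
    · exact le_refl _
  · exact le_refl _

lemma psStep_nonneg {V : Type*} [DecidableEq V] (ε : ℝ) (hε : 0 ≤ ε) (φ : V → ℝ)
    (hφ : ∀ v, 0 ≤ φ v) (e : (V × V) × ℝ) (v : V) :
    0 ≤ psStep ε φ e v :=
  le_trans (hφ v) (psStep_mono ε hε φ hφ e v)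

lemma psFoldl_mono {V : Type*} [DecidableEq V] (ε : ℝ) (hε : 0 ≤ ε)
    (l : List ((V × V) × ℝ)) :
    ∀ (φ : V → ℝ), (∀ v, 0 ≤ φ v) → ∀ v, φ v ≤ l.foldl (psStep ε) φ v := by
  induction l with
  | nil => intro φ hφ v; exact le_refl _
  | cons a l ih =>
      intro φ hφ v
      simp only [List.foldl_cons]
      exact le_trans (psStep_mono ε hε φ hφ a v)
        (ih (psStep ε φ a) (psStep_nonneg ε hε φ hφ a) v)

lemma psStep_inv {V : Type*} [DecidableEq V] (ε : ℝ) (hε : 0 ≤ ε) (φ : V → ℝ)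
    (hφ : ∀ v, 0 ≤ φ v) (e : (V × V) × ℝ) (hne : e.1.1 ≠ e.1.2) (hw : 0 ≤ e.2) :
    e.2 ≤ (1 + ε) * (psStep ε φ e e.1.1 + psStep ε φ e e.1.2) := by
  unfold psStep
  split_ifs with h
  · simp only [eq_self_iff_true, true_or, or_true, if_true]
    nlinarith [hφ e.1.1, hφ e.1.2]
  · nlinarith [hφ e.1.1, hφ e.1.2]

lemma psMain {V : Type*} [DecidableEq V] (ε : ℝ) (hε : 0 ≤ ε) :
    ∀ (l : List ((V × V) × ℝ)) (φ : V → ℝ), (∀ v, 0 ≤ φ v) →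
    (∀ e ∈ l, e.1.1 ≠ e.1.2) → (∀ e ∈ l, 0 ≤ e.2) →
    ∀ e ∈ l, e.2 ≤ (1 + ε) * (l.foldl (psStep ε) φ e.1.1 + l.foldl (psStep ε) φ e.1.2) := by
  intro l
  induction l with
  | nil => intro φ _ _ _ e he; exact absurd he List.not_mem_nil
  | cons a l ih =>
      intro φ hφ hloop hw e he
      simp only [List.foldl_cons]
      have hψ : ∀ v, 0 ≤ psStep ε φ a v :=
        psStep_nonneg ε hε φ hφ a
      rcases List.mem_cons.mp he with rfl | he'
      · have h1 := psStep_inv ε hε φ hφ e (hloop e List.mem_cons_self)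
          (hw e List.mem_cons_self)
        have h2 := psFoldl_mono ε hε l (psStep ε φ e) hψ e.1.1
        have h3 := psFoldl_mono ε hε l (psStep ε φ e) hψ e.1.2
        have h4 : (0:ℝ) ≤ 1 + ε := by linarith
        calc e.2 ≤ (1 + ε) * (psStep ε φ e e.1.1 + psStep ε φ e e.1.2) := h1
          _ ≤ (1 + ε) * (l.foldl (psStep ε) (psStep ε φ e) e.1.1 +
                l.foldl (psStep ε) (psStep ε φ e) e.1.2) := by
              apply mul_le_mul_of_nonneg_left (add_le_add h2 h3) h4
      · exact ih (psStep ε φ a) hψ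
          (fun e' he'' => hloop e' (List.mem_cons_of_mem a he''))
          (fun e' he'' => hw e' (List.mem_cons_of_mem a he'')) e he'

/-- Proposition 3 (Ghaffari–Wajc): after processing the whole stream, every
edge weight is bounded by `(1+ε)` times the sum of the final potentials of its
endpoints. -/
theorem stmt_12 {V : Type*} [DecidableEq V] (ε : ℝ) (hε : 0 ≤ ε)
    (l : List ((V × V) × ℝ))
    (hloop : ∀ e ∈ l, e.1.1 ≠ e.1.2) (hw : ∀ e ∈ l, 0 ≤ e.2) :
    ∀ e ∈ l, e.2 ≤ (1 + ε) * (psPot ε l e.1.1 + psPot ε l e.1.2) := by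
  exact psMain ε hε l (fun _ => 0) (fun _ => le_refl 0) hloop hw
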